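/- (Theorem 2, case s\mu = 1.) Let q \in (0,1), let \eta_0 > 0 and \eta_{-1} > 0, and set \eta_k := q^k \eta_0 for k \ge 1. Let s > 0, \mu > 0 with s\mu = 1, and let C_I > 0, C_X > 0. For \varepsilon \in (0,1) let K(\varepsilon) be the least natural number K with 2 C_X q^K \eta_0 \le \varepsilon, and define F_k := (\eta_k^{-s} + \eta_{k-1}^{-s}) \eta_{k-1}^{-1} and G_K := \sum_{k=0}^{K} F_k^{\mu/(\mu+1)} \eta_{k-1}. Then there exists a constant C > 0, independent of \varepsilon, such that for all \varepsilon \in (0,1): (2 C_I)^{1/\mu} G_{K(\varepsilon)}^{(\mu+1)/\mu} \varepsilon^{-1/\mu} + \sum_{k=0}^{K(\varepsilon)} F_k \eta_{k-1} \le C \varepsilon^{-1/\mu} (1 + |\log \varepsilon|)^{1 + 1/\mu}. -/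

import Mathlib

open Finset

private lemma pow_rpow_aux (x : ℝ) (hx : 0 ≤ x) (θ : ℝ) (m : ℕ) :
    (x ^ m) ^ θ = (x ^ θ) ^ m := by
  rw [← Real.rpow_natCast x m, ← Real.rpow_natCast (x ^ θ) m,
    ← Real.rpow_mul hx, ← Real.rpow_mul hx, mul_comm]

set_option maxHeartbeats 1000000 in
/-- Theorem 2, case sμ = 1: ε-cost bound of the multilevel stochastic collocation
method with geometric spatial tolerances. -/
theorem epsilon_cost_case_9
    (q η0 ηm s μ CI CX : ℝ)
    (hq0 : 0 < q) (hq1 : q < 1) (hη0 : 0 < η0) (hηm : 0 < ηm)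
    (hs : 0 < s) (hμ : 0 < μ) (hsμ : s * μ = 1)
    (hCI : 0 < CI) (hCX : 0 < CX)
    (η : ℤ → ℝ)
    (hηneg : η (-1) = ηm)
    (hηnat : ∀ k : ℕ, η (k : ℤ) = q ^ k * η0)
    (Kf : ℝ → ℕ)
    (hKf : ∀ ε : ℝ, 0 < ε → ε < 1 →
      IsLeast {K : ℕ | 2 * CX * q ^ K * η0 ≤ ε} (Kf ε))
    (F : ℕ → ℝ)
    (hF : ∀ k : ℕ,
      F k = (η (k : ℤ) ^ (-s) + η ((k : ℤ) - 1) ^ (-s)) * (η ((k : ℤ) - 1))⁻¹)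
    (G : ℕ → ℝ)
    (hG : ∀ K : ℕ,
      G K = ∑ k ∈ range (K + 1), F k ^ (μ / (μ + 1)) * η ((k : ℤ) - 1)) :
    ∃ C : ℝ, 0 < C ∧ ∀ ε : ℝ, 0 < ε → ε < 1 →
      (2 * CI) ^ (1 / μ) * G (Kf ε) ^ ((μ + 1) / μ) * ε ^ (-(1 / μ)) +
          ∑ k ∈ range (Kf ε + 1), F k * η ((k : ℤ) - 1) ≤
        C * ε ^ (-(1 / μ)) * (1 + |Real.log ε|) ^ (1 + 1 / μ) := by
  have hμ' : μ ≠ 0 := ne_of_gt hμ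
  have hs' : s = 1 / μ := by field_simp; linarith [hsμ]
  subst hs'
  set s : ℝ := 1 / μ with hsdef
  have hspos : 0 < s := hs
  have hp : (μ + 1) / μ = 1 + s := by rw [hsdef]; field_simp
  set θ : ℝ := μ / (μ + 1) with hθdef
  have hθpos : 0 < θ := by rw [hθdef]; positivity
  have hθ1 : (-s - 1) * θ = -1 := by
    rw [hsdef, hθdef]; field_simp; ring
  set r : ℝ := q ^ (-s) with hrdef
  have hr1 : 1 < r := by
    rw [hrdef, Real.one_lt_rpow_iff_of_pos hq0]
    exact Or.inr ⟨hq1, by linarith⟩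
  have hr0 : 0 < r := lt_trans one_pos hr1
  -- η at shifted indices
  have hη0m : η ((0 : ℕ) - 1 : ℤ) = ηm := by norm_num [hηneg]
  have hηkm : ∀ m : ℕ, η (((m + 1 : ℕ) : ℤ) - 1) = q ^ m * η0 := by
    intro m
    have h : ((m + 1 : ℕ) : ℤ) - 1 = (m : ℤ) := by push_cast; ring
    rw [h, hηnat]
  have hηpos : ∀ k : ℕ, 0 < η ((k : ℤ) - 1) := by
    intro k
    cases k with
    | zero => rw [show ((0:ℕ):ℤ) - 1 = ((0:ℕ) - 1 : ℤ) by norm_num, hη0m]; exact hηm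
    | succ m => rw [hηkm m]; positivity
  -- rpow computation
  have hqks : ∀ k : ℕ, ((q ^ k : ℝ) * η0) ^ (-s) = η0 ^ (-s) * r ^ k := by
    intro k
    rw [Real.mul_rpow (by positivity) hη0.le, pow_rpow_aux q hq0.le (-s) k, mul_comm]
  have hη0s : 0 < η0 ^ (-s) := Real.rpow_pos_of_pos hη0 _
  have hηms : 0 < ηm ^ (-s) := Real.rpow_pos_of_pos hηm _
  have hFpos : ∀ k : ℕ, 0 < F k := by
    intro k
    rw [hF k]
    have h1 : 0 < η (k : ℤ) ^ (-s) :=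
      Real.rpow_pos_of_pos (by rw [hηnat]; positivity) _
    have h2 : 0 < η ((k : ℤ) - 1) ^ (-s) := Real.rpow_pos_of_pos (hηpos k) _
    exact mul_pos (add_pos h1 h2) (inv_pos.mpr (hηpos k))
  have hFη : ∀ k : ℕ, F k * η ((k : ℤ) - 1)
      = η (k : ℤ) ^ (-s) + η ((k : ℤ) - 1) ^ (-s) := by
    intro k
    rw [hF k, mul_assoc, inv_mul_cancel₀ (hηpos k).ne', mul_one]
  -- Step A : per-term bound for the second sum
  have hA : ∀ K k : ℕ, k ≤ K →
      F k * η ((k : ℤ) - 1) ≤ ηm ^ (-s) + 2 * η0 ^ (-s) * r ^ K := by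
    intro K k hk
    rw [hFη k]
    have hrK : r ^ k ≤ r ^ K := pow_le_pow_right₀ hr1.le hk
    cases k with
    | zero =>
      have e0 : η ((0 : ℕ) : ℤ) ^ (-s) = η0 ^ (-s) * r ^ 0 := by
        rw [hηnat 0, hqks 0]
      have e1 : η (((0:ℕ):ℤ) - 1) ^ (-s) = ηm ^ (-s) := by
        rw [show ((0:ℕ):ℤ) - 1 = ((0:ℕ) - 1 : ℤ) by norm_num, hη0m]
      rw [e0, e1, pow_zero]
      have h1 : (1:ℝ) ≤ r ^ K := one_le_pow₀ hr1.le
      have h2 : η0 ^ (-s) * 1 ≤ η0 ^ (-s) * r ^ K :=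
        mul_le_mul_of_nonneg_left h1 hη0s.le
      linarith
    | succ m =>
      have e0 : η (((m+1:ℕ)) : ℤ) ^ (-s) = η0 ^ (-s) * r ^ (m+1) := by
        rw [hηnat (m+1), hqks (m+1)]
      have e1 : η (((m+1:ℕ):ℤ) - 1) ^ (-s) = η0 ^ (-s) * r ^ m := by
        rw [hηkm m, hqks m]
      rw [e0, e1]
      have h2 : r ^ m ≤ r ^ K := pow_le_pow_right₀ hr1.le (le_trans (Nat.le_succ m) hk)
      have h3 : η0 ^ (-s) * r ^ (m+1) ≤ η0 ^ (-s) * r ^ K :=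
        mul_le_mul_of_nonneg_left hrK hη0s.le
      have h4 : η0 ^ (-s) * r ^ m ≤ η0 ^ (-s) * r ^ K :=
        mul_le_mul_of_nonneg_left h2 hη0s.le
      linarith
  -- Step B : per-term bound for G
  set D : ℝ := 2 * η0 ^ (-s) * r * η0⁻¹ with hD
  have hDpos : 0 < D := by positivity
  set x : ℝ := q ^ (-s - 1) with hxdef
  have hxpos : 0 < x := Real.rpow_pos_of_pos hq0 _
  have hxθ : x ^ θ = q⁻¹ := by
    rw [hxdef, ← Real.rpow_mul hq0.le, hθ1, Real.rpow_neg_one]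
  have hxrq : x = r * q⁻¹ := by
    rw [hxdef, hrdef, show (-s - 1 : ℝ) = -s + (-1) by ring, Real.rpow_add hq0,
      Real.rpow_neg_one]
  set c4 : ℝ := F 0 ^ θ * ηm + D ^ θ * η0 with hc4
  have hc4pos : 0 < c4 :=
    add_pos_of_nonneg_of_pos (mul_nonneg (Real.rpow_nonneg (hFpos 0).le θ) hηm.le)
      (mul_pos (Real.rpow_pos_of_pos hDpos θ) hη0)
  have hB : ∀ k : ℕ, F k ^ θ * η ((k : ℤ) - 1) ≤ c4 := by
    intro k
    cases k with
    | zero =>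
      rw [show ((0:ℕ):ℤ) - 1 = ((0:ℕ) - 1 : ℤ) by norm_num, hη0m, hc4]
      have : 0 < D ^ θ * η0 := mul_pos (Real.rpow_pos_of_pos hDpos θ) hη0
      linarith
    | succ m =>
      have hFle : F (m + 1) ≤ x ^ m * D := by
        rw [hF (m + 1)]
        have e1 : η ((m + 1 : ℕ) : ℤ) ^ (-s) = η0 ^ (-s) * r ^ (m + 1) := by
          rw [hηnat (m + 1), hqks (m + 1)]
        have e2 : η (((m + 1 : ℕ) : ℤ) - 1) ^ (-s) = η0 ^ (-s) * r ^ m := by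
          rw [hηkm m, hqks m]
        have e3 : (η (((m + 1 : ℕ) : ℤ) - 1))⁻¹ = (q ^ m * η0)⁻¹ := by
          rw [hηkm m]
        rw [e1, e2, e3]
        have key : x ^ m * D = 2 * η0 ^ (-s) * r ^ (m + 1) * (q ^ m * η0)⁻¹ := by
          rw [hxrq, mul_pow, hD, pow_succ]
          field_simp
          ring_nf
          rw [← mul_pow, mul_inv_cancel₀ hq0.ne', one_pow]
        rw [key]
        have hrm : r ^ m ≤ r ^ (m + 1) := pow_le_pow_right₀ hr1.le (Nat.le_succ m)
        have hinv : (0:ℝ) < (q ^ m * η0)⁻¹ := by positivity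
        have hsum : η0 ^ (-s) * r ^ (m + 1) + η0 ^ (-s) * r ^ m
            ≤ 2 * η0 ^ (-s) * r ^ (m + 1) := by
          have h5 : η0 ^ (-s) * r ^ m ≤ η0 ^ (-s) * r ^ (m+1) :=
            mul_le_mul_of_nonneg_left hrm hη0s.le
          linarith
        exact mul_le_mul_of_nonneg_right hsum hinv.le
      have hxmθ : (x ^ m) ^ θ = (q⁻¹) ^ m := by
        rw [pow_rpow_aux x hxpos.le θ m, hxθ]
      have step : F (m + 1) ^ θ ≤ (q⁻¹) ^ m * D ^ θ := by
        calc F (m + 1) ^ θ ≤ (x ^ m * D) ^ θ :=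
              Real.rpow_le_rpow (hFpos _).le hFle hθpos.le
          _ = (q⁻¹) ^ m * D ^ θ := by
              rw [Real.mul_rpow (by positivity) hDpos.le, hxmθ]
      rw [hηkm m]
      have h1 : F (m + 1) ^ θ * (q ^ m * η0) ≤ ((q⁻¹) ^ m * D ^ θ) * (q ^ m * η0) :=
        mul_le_mul_of_nonneg_right step (by positivity)
      have h2 : ((q⁻¹) ^ m * D ^ θ) * (q ^ m * η0) = D ^ θ * η0 := by
        rw [inv_pow]
        field_simp
      rw [h2] at h1
      refine le_trans h1 ?_
      rw [hc4]
      have : 0 ≤ F 0 ^ θ * ηm :=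
        mul_nonneg (Real.rpow_nonneg (hFpos 0).le θ) hηm.le
      linarith
  -- G bounds
  have hGle : ∀ K : ℕ, G K ≤ c4 * ((K : ℝ) + 1) := by
    intro K
    rw [hG K]
    calc ∑ k ∈ range (K + 1), F k ^ θ * η ((k : ℤ) - 1)
        ≤ ∑ _k ∈ range (K + 1), c4 := Finset.sum_le_sum fun k _ => hB k
      _ = c4 * ((K : ℝ) + 1) := by
          rw [Finset.sum_const, card_range]
          push_cast
          ring
  have hGnonneg : ∀ K : ℕ, 0 ≤ G K := by
    intro K
    rw [hG K]
    exact Finset.sum_nonneg fun k _ =>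
      mul_nonneg (Real.rpow_nonneg (hFpos k).le θ) (hηpos k).le
  -- constants
  set c1 : ℝ := r * (2 * CX * η0) ^ s + 1 with hc1
  have hc1pos : 0 < c1 := by positivity
  set D0 : ℝ := -Real.log q with hD0
  have hD0pos : 0 < D0 := by
    rw [hD0]
    have := Real.log_neg hq0 hq1
    linarith
  set L : ℝ := Real.log (2 * CX * η0) with hL
  set c2 : ℝ := 2 + (|L| + 1) / D0 with hc2
  have hc2two : (2:ℝ) ≤ c2 := by
    have h : 0 ≤ (|L| + 1) / D0 := by positivity
    rw [hc2]; linarith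
  have hc2pos : 0 < c2 := by linarith
  set A : ℝ := ηm ^ (-s) with hAdef
  set B : ℝ := 2 * η0 ^ (-s) with hBdef
  have hApos : 0 < A := hηms
  have hBpos : 0 < B := by rw [hBdef]; positivity
  refine ⟨(2 * CI) ^ s * c4 ^ (1 + s) * c2 ^ (1 + s) + (A + B * c1) * c2, ?_, ?_⟩
  · have h1 : 0 < (2 * CI) ^ s := Real.rpow_pos_of_pos (by linarith) s
    have h2 : 0 < c4 ^ (1 + s) := Real.rpow_pos_of_pos hc4pos _
    have h3 : 0 < c2 ^ (1 + s) := Real.rpow_pos_of_pos hc2pos _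
    exact add_pos (mul_pos (mul_pos h1 h2) h3)
      (mul_pos (add_pos hApos (mul_pos hBpos hc1pos)) hc2pos)
  intro ε hε0 hε1
  obtain ⟨hmem, hlb⟩ := hKf ε hε0 hε1
  set K := Kf ε with hK
  have hεs1 : (1 : ℝ) ≤ ε ^ (-s) := by
    have h : (1:ℝ) < ε ^ (-s) :=
      (Real.one_lt_rpow_iff_of_pos hε0).mpr (Or.inr ⟨hε1, by linarith⟩)
    linarith
  have hεspos : 0 < ε ^ (-s) := Real.rpow_pos_of_pos hε0 _
  have hlogε : Real.log ε < 0 := Real.log_neg hε0 hε1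
  have habs : |Real.log ε| = -Real.log ε := abs_of_neg hlogε
  set a : ℝ := |Real.log ε| with ha
  have ha0 : 0 ≤ a := abs_nonneg _
  -- minimality consequence
  have hmin : 0 < K → ε < 2 * CX * q ^ (K - 1) * η0 := by
    intro hKpos
    by_contra h
    push_neg at h
    have hmem' : K - 1 ∈ {K : ℕ | 2 * CX * q ^ K * η0 ≤ ε} := h
    have := hlb hmem'
    omega
  -- r^K bound
  have hrK : r ^ K ≤ c1 * ε ^ (-s) := by
    rcases Nat.eq_zero_or_pos K with h | h
    · rw [h, pow_zero]
      have h1 : 0 < r * (2 * CX * η0) ^ s :=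
        mul_pos hr0 (Real.rpow_pos_of_pos (by positivity) s)
      have h1c1 : (1:ℝ) ≤ c1 := by rw [hc1]; linarith
      have h2 : (1:ℝ) * 1 ≤ c1 * ε ^ (-s) :=
        mul_le_mul h1c1 hεs1 zero_le_one (by linarith)
      linarith
    · have hlt := hmin h
      have hy : (0:ℝ) < 2 * CX * η0 := by positivity
      have hqK : q ^ K = q * q ^ (K - 1) := by
        rw [← pow_succ']
        congr 1
        omega
      have hab : q * ε / (2 * CX * η0) ≤ q ^ K := by
        rw [hqK, div_le_iff₀ hy]
        have h0 := mul_le_mul_of_nonneg_left hlt.le hq0.le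
        linarith [h0]
      have hapos : 0 < q * ε / (2 * CX * η0) := by positivity
      have h1 : (q ^ K) ^ (-s) ≤ (q * ε / (2 * CX * η0)) ^ (-s) :=
        Real.rpow_le_rpow_of_nonpos hapos hab (by linarith)
      have h2 : r ^ K = (q ^ K) ^ (-s) := (pow_rpow_aux q hq0.le (-s) K).symm
      have h3 : (q * ε / (2 * CX * η0)) ^ (-s)
          = r * (2 * CX * η0) ^ s * ε ^ (-s) := by
        rw [Real.div_rpow (by positivity) hy.le,
          Real.mul_rpow hq0.le hε0.le,
          Real.rpow_neg hy.le, div_eq_mul_inv, inv_inv, hrdef]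
        ring
      rw [h2]
      calc (q ^ K) ^ (-s) ≤ (q * ε / (2 * CX * η0)) ^ (-s) := h1
        _ = r * (2 * CX * η0) ^ s * ε ^ (-s) := h3
        _ ≤ c1 * ε ^ (-s) := by
            rw [hc1]
            exact mul_le_mul_of_nonneg_right
              (le_add_of_nonneg_right zero_le_one) hεspos.le
  -- K+1 bound
  have hKb : (K : ℝ) + 1 ≤ c2 * (1 + a) := by
    rcases Nat.eq_zero_or_pos K with h | h
    · rw [h]
      push_cast
      linarith [mul_nonneg hc2pos.le ha0, hc2two]
    · have hlt := hmin h
      have hy : (0:ℝ) < 2 * CX * η0 := by positivity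
      have hlog : Real.log ε < L + ((K : ℝ) - 1) * Real.log q := by
        calc Real.log ε < Real.log (2 * CX * q ^ (K - 1) * η0) :=
              Real.log_lt_log hε0 hlt
          _ = L + ((K : ℝ) - 1) * Real.log q := by
              rw [show 2 * CX * q ^ (K - 1) * η0 = (2 * CX * η0) * q ^ (K - 1) by ring,
                Real.log_mul hy.ne' (by positivity : (q:ℝ) ^ (K-1) ≠ 0),
                Real.log_pow, hL]
              have : ((K - 1 : ℕ) : ℝ) = (K : ℝ) - 1 := by
                have : (1:ℕ) ≤ K := h
                push_cast [Nat.cast_sub this]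
                ring
              rw [this]
      have h1 : ((K : ℝ) - 1) * D0 ≤ |L| + a := by
        have hLle : L ≤ |L| := le_abs_self L
        have haeq : a = -Real.log ε := habs
        rw [hD0]
        linarith [hlog, hLle, haeq]
      have hc2D : c2 * D0 = 2 * D0 + |L| + 1 := by
        rw [hc2]
        field_simp
        ring
      have key : ((K : ℝ) + 1) * D0 ≤ (2 * D0 + |L| + 1) * (1 + a) := by
        linarith [h1, mul_nonneg ha0 hD0pos.le, mul_nonneg (abs_nonneg L) ha0]
      have key2 : (2 * D0 + |L| + 1) * (1 + a) = (c2 * (1 + a)) * D0 := by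
        rw [← hc2D]; ring
      rw [key2] at key
      exact le_of_mul_le_mul_right key hD0pos
  -- final assembly
  rw [hp]
  have hbase1 : (1:ℝ) ≤ 1 + a := by linarith
  have hpow1 : (1 + a) ≤ (1 + a) ^ (1 + s) := by
    calc (1 + a) = (1 + a) ^ (1:ℝ) := (Real.rpow_one _).symm
      _ ≤ (1 + a) ^ (1 + s) :=
        Real.rpow_le_rpow_of_exponent_le hbase1 (by linarith)
  have hpowpos : 0 < (1 + a) ^ (1 + s) := Real.rpow_pos_of_pos (by linarith) _
  -- term 1
  have hT1 : (2 * CI) ^ s * G K ^ (1 + s) * ε ^ (-s)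
      ≤ (2 * CI) ^ s * c4 ^ (1 + s) * c2 ^ (1 + s) * ε ^ (-s) * (1 + a) ^ (1 + s) := by
    have hG1 : G K ≤ c4 * (c2 * (1 + a)) := by
      calc G K ≤ c4 * ((K : ℝ) + 1) := hGle K
        _ ≤ c4 * (c2 * (1 + a)) := by
            exact mul_le_mul_of_nonneg_left hKb hc4pos.le
    have hG2 : G K ^ (1 + s) ≤ c4 ^ (1 + s) * c2 ^ (1 + s) * (1 + a) ^ (1 + s) := by
      calc G K ^ (1 + s) ≤ (c4 * (c2 * (1 + a))) ^ (1 + s) :=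
            Real.rpow_le_rpow (hGnonneg K) hG1 (by linarith)
        _ = c4 ^ (1 + s) * c2 ^ (1 + s) * (1 + a) ^ (1 + s) := by
            rw [Real.mul_rpow hc4pos.le (by positivity),
              Real.mul_rpow hc2pos.le (by linarith)]
            ring
    have h2CIs : 0 < (2 * CI) ^ s := Real.rpow_pos_of_pos (by linarith) s
    calc (2 * CI) ^ s * G K ^ (1 + s) * ε ^ (-s)
        ≤ (2 * CI) ^ s * (c4 ^ (1 + s) * c2 ^ (1 + s) * (1 + a) ^ (1 + s)) * ε ^ (-s) := by
          apply mul_le_mul_of_nonneg_right _ hεspos.le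
          exact mul_le_mul_of_nonneg_left hG2 h2CIs.le
      _ = (2 * CI) ^ s * c4 ^ (1 + s) * c2 ^ (1 + s) * ε ^ (-s) * (1 + a) ^ (1 + s) := by
          ring
  -- term 2
  have hT2 : ∑ k ∈ range (K + 1), F k * η ((k : ℤ) - 1)
      ≤ (A + B * c1) * c2 * ε ^ (-s) * (1 + a) ^ (1 + s) := by
    have hsum : ∑ k ∈ range (K + 1), F k * η ((k : ℤ) - 1)
        ≤ ((K : ℝ) + 1) * (A + B * r ^ K) := by
      calc ∑ k ∈ range (K + 1), F k * η ((k : ℤ) - 1)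
          ≤ ∑ _k ∈ range (K + 1), (A + B * r ^ K) :=
            Finset.sum_le_sum fun k hk =>
              hA K k (by simpa [Nat.lt_succ_iff] using Finset.mem_range.mp hk)
        _ = ((K : ℝ) + 1) * (A + B * r ^ K) := by
            rw [Finset.sum_const, card_range]
            push_cast
            ring
    have hstep : A + B * r ^ K ≤ (A + B * c1) * ε ^ (-s) := by
      have h1 : B * r ^ K ≤ B * c1 * ε ^ (-s) := by
        calc B * r ^ K ≤ B * (c1 * ε ^ (-s)) := mul_le_mul_of_nonneg_left hrK hBpos.le
          _ = B * c1 * ε ^ (-s) := by ring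
      have h2 : A ≤ A * ε ^ (-s) := le_mul_of_one_le_right hApos.le hεs1
      calc A + B * r ^ K ≤ A * ε ^ (-s) + B * c1 * ε ^ (-s) := add_le_add h2 h1
        _ = (A + B * c1) * ε ^ (-s) := by ring
    calc ∑ k ∈ range (K + 1), F k * η ((k : ℤ) - 1)
        ≤ ((K : ℝ) + 1) * (A + B * r ^ K) := hsum
      _ ≤ (c2 * (1 + a)) * ((A + B * c1) * ε ^ (-s)) := by
          apply mul_le_mul hKb hstep
          · have h6 : 0 ≤ B * r ^ K := mul_nonneg hBpos.le (pow_pos hr0 K).le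
            linarith
          · positivity
      _ = (A + B * c1) * c2 * ε ^ (-s) * (1 + a) := by ring
      _ ≤ (A + B * c1) * c2 * ε ^ (-s) * (1 + a) ^ (1 + s) := by
          apply mul_le_mul_of_nonneg_left hpow1
          positivity
  calc (2 * CI) ^ s * G K ^ (1 + s) * ε ^ (-s)
        + ∑ k ∈ range (K + 1), F k * η ((k : ℤ) - 1)
      ≤ (2 * CI) ^ s * c4 ^ (1 + s) * c2 ^ (1 + s) * ε ^ (-s) * (1 + a) ^ (1 + s)
        + (A + B * c1) * c2 * ε ^ (-s) * (1 + a) ^ (1 + s) := add_le_add hT1 hT2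
    _ = ((2 * CI) ^ s * c4 ^ (1 + s) * c2 ^ (1 + s) + (A + B * c1) * c2)
        * ε ^ (-s) * (1 + a) ^ (1 + s) := by ring
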